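/- Let ‖·‖ be a norm on ℝ^d and let V be a finite set in ℝ^d with at least two points. Then the number of elements of V satisfies |V| ≤ (λ(V; ‖·‖) + 1)^d. -/

import Mathlib

open Pointwise

/-- `N` is a norm on the real vector space `E`. -/
def IsNorm {E : Type*} [AddCommGroup E] [Module ℝ E] (N : E → ℝ) : Prop :=
  (∀ x, N x = 0 ↔ x = 0) ∧ (∀ (a : ℝ) (x : E), N (a • x) = |a| * N x) ∧
  (∀ x y, N (x + y) ≤ N x + N y)

/-- The segment `[x, y]` is an edge (a 1-dimensional face) of `P`. -/
def IsEdge {E : Type*} [AddCommGroup E] [Module ℝ E] (P : Set E) (x y : E) : Prop :=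
  x ≠ y ∧ IsExtreme ℝ P (segment ℝ x y)

/-- The diameter of a set `P` with respect to the norm `N`. -/
noncomputable def polyDiam {E : Type*} [AddCommGroup E] (N : E → ℝ) (P : Set E) : ℝ :=
  sSup {r | ∃ x ∈ P, ∃ y ∈ P, N (x - y) = r}

/-- The minimum pairwise distance of a finite set `V` with respect to the norm `N`. -/
noncomputable def minPairDist {E : Type*} [AddCommGroup E] (N : E → ℝ) (V : Finset E) : ℝ :=
  sInf {r | ∃ x ∈ V, ∃ y ∈ V, x ≠ y ∧ N (x - y) = r}

/-- The functional `λ(V; N) = diam(V) / min pairwise distance`. -/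
noncomputable def lamV {E : Type*} [AddCommGroup E] (N : E → ℝ) (V : Finset E) : ℝ :=
  polyDiam N (V : Set E) / minPairDist N V

/-- `P` is subequilateral with respect to `N`: every edge has length the diameter of `P`. -/
def Subequilateral {E : Type*} [AddCommGroup E] [Module ℝ E] (N : E → ℝ) (P : Set E) : Prop :=
  ∀ x y, IsEdge P x y → N (x - y) = polyDiam N P

/-- There are two parallel hyperplanes, one through `x` and one through `y`, such that `P`
lies in the closed slab bounded by them. -/
def InSlab {E : Type*} [AddCommGroup E] [Module ℝ E] (P : Set E) (x y : E) : Prop :=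
  ∃ f : E →ₗ[ℝ] ℝ, f ≠ 0 ∧ ∀ z ∈ P, min (f x) (f y) ≤ f z ∧ f z ≤ max (f x) (f y)

/-- `P` is edge-antipodal. -/
def EdgeAntipodal {E : Type*} [AddCommGroup E] [Module ℝ E] (P : Set E) : Prop :=
  ∀ x y, IsEdge P x y → InSlab P x y

/-- `P` is antipodal. -/
def Antipodal {E : Type*} [AddCommGroup E] [Module ℝ E] (P : Set E) : Prop :=
  ∀ x ∈ Set.extremePoints ℝ P, ∀ y ∈ Set.extremePoints ℝ P, x ≠ y → InSlab P x y

/-- The relative norm determined by `P`, i.e. the norm with unit ball `P - P`. -/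
noncomputable def relNorm {E : Type*} [AddCommGroup E] [Module ℝ E] (P : Set E) : E → ℝ :=
  gauge (P - P)

section Aux

variable {E : Type*} [AddCommGroup E] [Module ℝ E] {N : E → ℝ}

lemma IsNorm.zero (hN : IsNorm N) : N 0 = 0 := (hN.1 0).mpr rfl

lemma IsNorm.nonneg (hN : IsNorm N) (x : E) : 0 ≤ N x := by
  have h1 : N (-x) = N x := by
    have := hN.2.1 (-1) x; simpa using this
  have h2 := hN.2.2 x (-x)
  rw [add_neg_cancel, hN.zero, h1] at h2
  linarith

lemma IsNorm.pos (hN : IsNorm N) {x : E} (hx : x ≠ 0) : 0 < N x := by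
  rcases lt_or_eq_of_le (hN.nonneg x) with h | h
  · exact h
  · exact absurd ((hN.1 x).mp h.symm) hx

lemma IsNorm.sum_le (hN : IsNorm N) {ι : Type*} (s : Finset ι) (f : ι → E) :
    N (∑ i ∈ s, f i) ≤ ∑ i ∈ s, N (f i) := by
  induction s using Finset.cons_induction with
  | empty => simp [hN.zero]
  | cons a s ha ih =>
    rw [Finset.sum_cons, Finset.sum_cons]
    exact le_trans (hN.2.2 _ _) (by linarith)

lemma IsNorm.convexOn (hN : IsNorm N) : ConvexOn ℝ Set.univ N := by
  refine ⟨convex_univ, fun x _ y _ a b ha hb hab => ?_⟩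
  calc N (a • x + b • y) ≤ N (a • x) + N (b • y) := hN.2.2 _ _
    _ = a * N x + b * N y := by
        rw [hN.2.1, hN.2.1, abs_of_nonneg ha, abs_of_nonneg hb]

/-- The `N`-diameter of the convex hull of a set equals that of the set. -/
lemma IsNorm.hull_diam (hN : IsNorm N) {s : Set E} {D : ℝ}
    (hD : ∀ x ∈ s, ∀ y ∈ s, N (x - y) ≤ D)
    {a b : E} (ha : a ∈ convexHull ℝ s) (hb : b ∈ convexHull ℝ s) : N (a - b) ≤ D := by
  have key : ∀ c : E, ConvexOn ℝ Set.univ (fun x => N (x - c)) := by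
    intro c
    refine ⟨convex_univ, fun x _ y _ p q hp hq hpq => ?_⟩
    have hxy : p • x + q • y - c = p • (x - c) + q • (y - c) := by
      have h1 : p • c + q • c = c := by rw [← add_smul, hpq, one_smul]
      conv_lhs => rw [← h1]
      rw [smul_sub, smul_sub]
      abel
    calc N (p • x + q • y - c) = N (p • (x - c) + q • (y - c)) := by rw [hxy]
      _ ≤ N (p • (x - c)) + N (q • (y - c)) := hN.2.2 _ _
      _ = p * N (x - c) + q * N (y - c) := by
          rw [hN.2.1, hN.2.1, abs_of_nonneg hp, abs_of_nonneg hq]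
  have key2 : ∀ c : E, ConvexOn ℝ Set.univ (fun x => N (c - x)) := by
    intro c
    refine ⟨convex_univ, fun x _ y _ p q hp hq hpq => ?_⟩
    have hxy : c - (p • x + q • y) = p • (c - x) + q • (c - y) := by
      have h1 : p • c + q • c = c := by rw [← add_smul, hpq, one_smul]
      conv_lhs => rw [← h1]
      rw [smul_sub, smul_sub]
      abel
    calc N (c - (p • x + q • y)) = N (p • (c - x) + q • (c - y)) := by rw [hxy]
      _ ≤ N (p • (c - x)) + N (q • (c - y)) := hN.2.2 _ _
      _ = p * N (c - x) + q * N (c - y) := by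
          rw [hN.2.1, hN.2.1, abs_of_nonneg hp, abs_of_nonneg hq]
  obtain ⟨v, hv, h1⟩ := (key b).exists_ge_of_mem_convexHull (Set.subset_univ s) ha
  obtain ⟨w, hw, h2⟩ := (key2 v).exists_ge_of_mem_convexHull (Set.subset_univ s) hb
  exact le_trans h1 (le_trans h2 (hD v hv w hw))

end Aux

/-- A norm on `Fin d → ℝ` is dominated by the sup norm. -/
lemma IsNorm.exists_bound {d : ℕ} {N : (Fin d → ℝ) → ℝ} (hN : IsNorm N) :
    ∃ C : ℝ, 0 < C ∧ ∀ x, N x ≤ C * ‖x‖ := by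
  classical
  set e : Fin d → (Fin d → ℝ) := fun i => fun j => if i = j then (1 : ℝ) else 0 with he
  refine ⟨(∑ i, N (e i)) + 1, ?_, fun x => ?_⟩
  · have : 0 ≤ ∑ i, N (e i) := Finset.sum_nonneg fun i _ => hN.nonneg _
    linarith
  · have hx : x = ∑ i, x i • e i := pi_eq_sum_univ x
    calc N x = N (∑ i, x i • e i) := by rw [← hx]
      _ ≤ ∑ i, N (x i • e i) := hN.sum_le _ _
      _ = ∑ i, |x i| * N (e i) := by simp [hN.2.1]
      _ ≤ ∑ i, ‖x‖ * N (e i) := by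
          refine Finset.sum_le_sum fun i _ => ?_
          exact mul_le_mul_of_nonneg_right (by simpa using norm_le_pi_norm x i) (hN.nonneg _)
      _ = (∑ i, N (e i)) * ‖x‖ := by
          rw [Finset.sum_mul]
          exact Finset.sum_congr rfl fun i _ => mul_comm _ _
      _ ≤ ((∑ i, N (e i)) + 1) * ‖x‖ := by
          exact mul_le_mul_of_nonneg_right (by linarith) (norm_nonneg x)

/-- Lemma 2: For a finite set `V` with at least two points in a `d`-dimensional
normed space, `|V| ≤ (λ(V; N) + 1)^d`. -/
theorem card_le_lam_pow (d : ℕ) (N : (Fin d → ℝ) → ℝ) (hN : IsNorm N)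
    (V : Finset (Fin d → ℝ)) (hV : 2 ≤ V.card) :
    (V.card : ℝ) ≤ (lamV N V + 1) ^ d := by
  classical
  -- two distinct points
  obtain ⟨x₀, hx₀, y₀, hy₀, hxy₀⟩ := Finset.one_lt_card.mp (by omega : 1 < V.card)
  -- the minimum distance set
  set Smin : Set ℝ := {r | ∃ x ∈ V, ∃ y ∈ V, x ≠ y ∧ N (x - y) = r} with hSmin
  have hSminfin : Smin.Finite := by
    have : Smin ⊆ (fun p : (Fin d → ℝ) × (Fin d → ℝ) => N (p.1 - p.2)) '' (↑V ×ˢ ↑V) := by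
      rintro r ⟨x, hx, y, hy, -, rfl⟩
      exact ⟨(x, y), by simp [hx, hy]⟩
    exact Set.Finite.subset (Set.Finite.image _ (Set.Finite.prod V.finite_toSet V.finite_toSet)) this
  have hSminne : Smin.Nonempty := ⟨N (x₀ - y₀), x₀, hx₀, y₀, hy₀, hxy₀, rfl⟩
  set m : ℝ := minPairDist N V with hm
  have hmmem : m ∈ Smin := hSminne.csInf_mem hSminfin
  have hmpos : 0 < m := by
    obtain ⟨x, -, y, -, hxy, hs⟩ := hmmem
    rw [← hs]
    exact hN.pos (sub_ne_zero.mpr hxy)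
  have hmle : ∀ x ∈ V, ∀ y ∈ V, x ≠ y → m ≤ N (x - y) := by
    intro x hx y hy hxy
    exact csInf_le hSminfin.bddBelow ⟨x, hx, y, hy, hxy, rfl⟩
  -- the diameter set
  set Sdiam : Set ℝ := {r | ∃ x ∈ (V : Set (Fin d → ℝ)), ∃ y ∈ (V : Set (Fin d → ℝ)),
      N (x - y) = r} with hSdiam
  have hSdiamfin : Sdiam.Finite := by
    have : Sdiam ⊆ (fun p : (Fin d → ℝ) × (Fin d → ℝ) => N (p.1 - p.2)) '' (↑V ×ˢ ↑V) := by
      rintro r ⟨x, hx, y, hy, rfl⟩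
      exact ⟨(x, y), by simp_all⟩
    exact Set.Finite.subset (Set.Finite.image _ (Set.Finite.prod V.finite_toSet V.finite_toSet)) this
  set D : ℝ := polyDiam N (V : Set (Fin d → ℝ)) with hD
  have hDle : ∀ x ∈ V, ∀ y ∈ V, N (x - y) ≤ D :=
    fun x hx y hy => le_csSup hSdiamfin.bddAbove ⟨x, hx, y, hy, rfl⟩
  have hmD : m ≤ D := le_trans (hmle x₀ hx₀ y₀ hy₀ hxy₀) (hDle x₀ hx₀ y₀ hy₀)
  have hlam : lamV N V = D / m := rfl
  -- handle d = 0
  rcases Nat.eq_zero_or_pos d with rfl | hd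
  · exfalso
    exact hxy₀ (Subsingleton.elim x₀ y₀)
  -- norm bound
  obtain ⟨Cb, hCbpos, hCb⟩ := hN.exists_bound
  -- Main claim: for every ε > 0, card ≤ (D/m + 1 + ε)^d
  have main : ∀ ε : ℝ, 0 < ε → (V.card : ℝ) ≤ (D / m + 1 + ε) ^ d := by
    intro ε hε
    set ρ : ℝ := m * ε / (4 * Cb) with hρ
    have hρpos : 0 < ρ := by positivity
    set B : Set (Fin d → ℝ) := Metric.closedBall 0 ρ with hB
    set C : Set (Fin d → ℝ) := convexHull ℝ (V : Set (Fin d → ℝ)) + B with hC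
    have hCconv : Convex ℝ C := (convex_convexHull ℝ _).add (convex_closedBall 0 ρ)
    have hCcomp : IsCompact C :=
      (V.finite_toSet.isCompact_convexHull ℝ).add (isCompact_closedBall 0 ρ)
    have hVC : ∀ v ∈ V, v ∈ C := by
      intro v hv
      refine ⟨v, subset_convexHull ℝ _ hv, 0, ?_, by simp⟩
      simp [hB, le_of_lt hρpos]
    -- diameter bound for C
    have hNB : ∀ b ∈ B, N b ≤ m * ε / 4 := by
      intro b hb
      have hnb : ‖b‖ ≤ ρ := by simpa [hB] using hb
      calc N b ≤ Cb * ‖b‖ := hCb b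
        _ ≤ Cb * ρ := by nlinarith
        _ = m * ε / 4 := by
            rw [hρ]
            field_simp
    have hdiamC : ∀ c ∈ C, ∀ c' ∈ C, N (c - c') ≤ D + m * ε / 2 := by
      rintro c ⟨a, ha, b, hb, rfl⟩ c' ⟨a', ha', b', hb', rfl⟩
      have h1 : N (a - a') ≤ D := hN.hull_diam hDle ha ha'
      have h2 : N b ≤ m * ε / 4 := hNB b hb
      have h3 : N (-b') ≤ m * ε / 4 := by
        have : N (-b') = N b' := by
          have := hN.2.1 (-1) b'; simpa using this
        rw [this]; exact hNB b' hb'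
      have heq : a + b - (a' + b') = (a - a') + b + (-b') := by abel
      calc N (a + b - (a' + b')) = N ((a - a') + b + (-b')) := by rw [heq]
        _ ≤ N ((a - a') + b) + N (-b') := hN.2.2 _ _
        _ ≤ N (a - a') + N b + N (-b') := by linarith [hN.2.2 (a - a') b]
        _ ≤ D + m * ε / 2 := by linarith
    -- homothety ratio
    set t : ℝ := m / (m + D + m * ε) with ht
    have hden : 0 < m + D + m * ε := by nlinarith
    have htpos : 0 < t := div_pos hmpos hden
    have htlt : t < 1 := by
      rw [div_lt_one hden]; nlinarith
    -- the homothets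
    set H : (Fin d → ℝ) → Set (Fin d → ℝ) := fun v => ((1 - t) • v) +ᵥ (t • C) with hH
    have hHmem : ∀ v z, z ∈ H v ↔ ∃ c ∈ C, (1 - t) • v + t • c = z := by
      intro v z
      constructor
      · rintro ⟨w, ⟨c, hc, rfl⟩, rfl⟩
        exact ⟨c, hc, rfl⟩
      · rintro ⟨c, hc, rfl⟩
        exact ⟨t • c, ⟨c, hc, rfl⟩, rfl⟩
    have hHsub : ∀ v ∈ V, H v ⊆ C := by
      intro v hv z hz
      obtain ⟨c, hc, rfl⟩ := (hHmem v z).1 hz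
      exact hCconv (hVC v hv) hc (by linarith) (le_of_lt htpos) (by ring)
    have hHdisj : (V : Set (Fin d → ℝ)).PairwiseDisjoint H := by
      intro u hu v hv huv
      rw [Function.onFun, Set.disjoint_left]
      rintro z hzu hzv
      obtain ⟨c, hc, hce⟩ := (hHmem u z).1 hzu
      obtain ⟨c', hc', hce'⟩ := (hHmem v z).1 hzv
      have heq : (1 - t) • (u - v) = t • (c' - c) := by
        have h := hce.trans hce'.symm
        have h2 : (1 - t) • u - (1 - t) • v = t • c' - t • c :=
          sub_eq_sub_iff_add_eq_add.mpr (h.trans (add_comm _ _))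
        rw [smul_sub, smul_sub]
        exact h2
      have hNeq : (1 - t) * N (u - v) = t * N (c' - c) := by
        have e1 := hN.2.1 (1 - t) (u - v)
        have e2 := hN.2.1 t (c' - c)
        rw [heq, e2, abs_of_nonneg (le_of_lt htpos)] at e1
        rw [abs_of_nonneg (by linarith : (0:ℝ) ≤ 1 - t)] at e1
        linarith
      have h1 : m ≤ N (u - v) := hmle u hu v hv huv
      have h2 : N (c' - c) ≤ D + m * ε / 2 := hdiamC c' hc' c hc
      -- (1 - t) * m ≤ t * (D + m ε / 2), but (1-t)*m = t*(D + m ε) > t*(D + m ε /2)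
      have key : (1 - t) * m = t * (D + m * ε) := by
        have e : t * (m + D + m * ε) = m := by rw [ht]; field_simp
        linear_combination (-1 : ℝ) * e
      have s1 : (1 - t) * m ≤ (1 - t) * N (u - v) :=
        mul_le_mul_of_nonneg_left h1 (by linarith)
      have s2 : t * N (c' - c) ≤ t * (D + m * ε / 2) :=
        mul_le_mul_of_nonneg_left h2 htpos.le
      have s3 : t * (D + m * ε) ≤ t * (D + m * ε / 2) := by linarith
      have s4 : 0 < t * (m * ε / 2) := by positivity
      have s5 : t * (D + m * ε) - t * (D + m * ε / 2) = t * (m * ε / 2) := by ring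
      linarith
    -- measure argument
    have hHcomp : ∀ v, IsCompact (H v) := by
      intro v
      exact (hCcomp.smul t).vadd _
    have hHmeas : ∀ v, MeasurableSet (H v) := fun v => (hHcomp v).isClosed.measurableSet
    have hμH : ∀ v, MeasureTheory.volume (H v)
        = ENNReal.ofReal (t ^ d) * MeasureTheory.volume C := by
      intro v
      rw [hH]
      simp only
      rw [MeasureTheory.measure_vadd]
      rw [MeasureTheory.Measure.addHaar_smul_of_nonneg _ (le_of_lt htpos)]
      congr 2
      simp [Module.finrank_fin_fun]
    have hunion : (⋃ v ∈ V, H v) ⊆ C := by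
      intro z hz
      simp only [Set.mem_iUnion] at hz
      obtain ⟨v, hv, hzv⟩ := hz
      exact hHsub v hv hzv
    have hsum : ∑ v ∈ V, MeasureTheory.volume (H v) ≤ MeasureTheory.volume C := by
      rw [← MeasureTheory.measure_biUnion_finset hHdisj (fun v _ => hHmeas v)]
      exact MeasureTheory.measure_mono hunion
    have hμCpos : 0 < MeasureTheory.volume C := by
      have hsub : (x₀ +ᵥ B) ⊆ C := by
        rintro z ⟨b, hb, rfl⟩
        exact ⟨x₀, subset_convexHull ℝ _ hx₀, b, hb, rfl⟩
      calc (0 : ENNReal) < MeasureTheory.volume B :=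
            Metric.measure_closedBall_pos _ _ hρpos
        _ = MeasureTheory.volume (x₀ +ᵥ B) := (MeasureTheory.measure_vadd _ _ _).symm
        _ ≤ MeasureTheory.volume C := MeasureTheory.measure_mono hsub
    have hμCfin : MeasureTheory.volume C ≠ ⊤ := hCcomp.measure_lt_top.ne
    have hcardle : (V.card : ENNReal) * ENNReal.ofReal (t ^ d) ≤ 1 := by
      have h1 : (V.card : ENNReal) * ENNReal.ofReal (t ^ d) * MeasureTheory.volume C
          ≤ 1 * MeasureTheory.volume C := by
        rw [one_mul, mul_assoc]
        calc (V.card : ENNReal) * (ENNReal.ofReal (t ^ d) * MeasureTheory.volume C)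
            = ∑ v ∈ V, MeasureTheory.volume (H v) := by
              rw [Finset.sum_congr rfl fun v _ => hμH v, Finset.sum_const, nsmul_eq_mul]
          _ ≤ MeasureTheory.volume C := hsum
      exact (ENNReal.mul_le_mul_iff_left hμCpos.ne' hμCfin).mp h1
    -- back to reals
    have htd : 0 < t ^ d := pow_pos htpos d
    have hreal : (V.card : ℝ) * t ^ d ≤ 1 := by
      rw [← ENNReal.ofReal_le_one]
      calc ENNReal.ofReal ((V.card : ℝ) * t ^ d)
          = ENNReal.ofReal (V.card : ℝ) * ENNReal.ofReal (t ^ d) :=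
            ENNReal.ofReal_mul (Nat.cast_nonneg _)
        _ = (V.card : ENNReal) * ENNReal.ofReal (t ^ d) := by
            rw [ENNReal.ofReal_natCast]
        _ ≤ 1 := hcardle
    have hinv : (1 / t) = D / m + 1 + ε := by
      rw [ht]
      field_simp
      ring
    calc (V.card : ℝ) = (V.card : ℝ) * t ^ d * (1 / t) ^ d := by
          rw [mul_assoc, ← mul_pow]
          rw [mul_one_div_cancel htpos.ne', one_pow, mul_one]
      _ ≤ 1 * (1 / t) ^ d := by
          apply mul_le_mul_of_nonneg_right hreal
          positivity
      _ = (D / m + 1 + ε) ^ d := by rw [one_mul, hinv]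
  -- take the limit ε → 0⁺
  rw [hlam]
  have htend : Filter.Tendsto (fun ε : ℝ => (D / m + 1 + ε) ^ d)
      (nhdsWithin 0 (Set.Ioi 0)) (nhds ((D / m + 1) ^ d)) := by
    have hc : Continuous (fun ε : ℝ => (D / m + 1 + ε) ^ d) :=
      (continuous_const.add continuous_id).pow d
    have := hc.tendsto 0
    simp only [add_zero] at this
    exact this.mono_left nhdsWithin_le_nhds
  exact ge_of_tendsto htend (Filter.eventually_of_mem self_mem_nhdsWithin fun ε hε => main ε hε)
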